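/- (Sabidussi for vector chromatic number) For any nonempty simple graphs G and H, the vector chromatic number of the Cartesian product G □ H equals the maximum of the vector chromatic numbers of G and H. -/

import Mathlib

/-- The vector chromatic number: the infimum of real `k > 1` such that the vertices
can be assigned unit vectors with inner product at most `-1/(k-1)` on edges. -/
noncomputable def vecChrom {V : Type*} (G : SimpleGraph V) : ℝ :=
  sInf {k : ℝ | 1 < k ∧ ∃ (d : ℕ) (φ : V → EuclideanSpace ℝ (Fin d)),
    (∀ v, ‖φ v‖ = 1) ∧ ∀ u v, G.Adj u v → (inner ℝ (φ u) (φ v) : ℝ) ≤ -(1 / (k - 1))}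

/-- The set of admissible `k` for a vector coloring of `G`. -/
def vcSet {V : Type*} (G : SimpleGraph V) : Set ℝ :=
  {k : ℝ | 1 < k ∧ ∃ (d : ℕ) (φ : V → EuclideanSpace ℝ (Fin d)),
    (∀ v, ‖φ v‖ = 1) ∧ ∀ u v, G.Adj u v → (inner ℝ (φ u) (φ v) : ℝ) ≤ -(1 / (k - 1))}

lemma vcSet_upward {V : Type*} (G : SimpleGraph V) {k k' : ℝ} (hk : k ∈ vcSet G)
    (hle : k ≤ k') : k' ∈ vcSet G := by
  obtain ⟨h1, d, φ, hn, he⟩ := hk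
  refine ⟨lt_of_lt_of_le h1 hle, d, φ, hn, fun u v huv => ?_⟩
  refine (he u v huv).trans ?_
  have h0 : (0:ℝ) < k - 1 := by linarith
  have h0' : (0:ℝ) < k' - 1 := by linarith
  have : 1 / (k' - 1) ≤ 1 / (k - 1) := by
    apply one_div_le_one_div_of_le h0; linarith
  linarith

lemma vcSet_bddBelow {V : Type*} (G : SimpleGraph V) : BddBelow (vcSet G) :=
  ⟨1, fun _ hk => le_of_lt hk.1⟩

/-- Simplex vectors: the `n+1`-point simplex gives a witness `k = card V + 1`. -/
lemma vcSet_nonempty {V : Type*} [Fintype V] [Nonempty V] (G : SimpleGraph V) :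
    (vcSet G).Nonempty := by
  set n := Fintype.card V with hn'
  have hn : 1 ≤ n := Fintype.card_pos
  set N : ℝ := (n : ℝ) with hN'
  have hN : 1 ≤ N := by rw [hN']; exact_mod_cast hn
  have hN0 : N ≠ 0 := by linarith
  have hN1 : N + 1 ≠ 0 := by linarith
  set c : ℝ := Real.sqrt ((N + 1) / N) with hc'
  have hc2 : c ^ 2 = (N + 1) / N := Real.sq_sqrt (by positivity)
  -- the simplex vectors
  set w : Fin (n + 1) → EuclideanSpace ℝ (Fin (n + 1)) :=
    fun i => WithLp.toLp 2 (fun j => if j = i then c * N / (N + 1) else -c / (N + 1)) with hw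
  have key : ∀ (x y : ℝ) (i : Fin (n + 1)), (∑ j, if j = i then x else y) = x + N * y := by
    intro x y i
    have h : ∀ j : Fin (n + 1), (if j = i then x else y)
        = y + (if j = i then x - y else 0) := by
      intro j; split <;> ring
    simp_rw [h, Finset.sum_add_distrib, Finset.sum_const, Finset.sum_ite_eq',
      Finset.mem_univ, if_pos, Finset.card_univ, Fintype.card_fin, nsmul_eq_mul]
    push_cast [hN']
    ring
  have key2 : ∀ (i i' : Fin (n + 1)), i ≠ i' →
      (∑ j, (if j = i then c * N / (N + 1) else -c / (N + 1)) *
        (if j = i' then c * N / (N + 1) else -c / (N + 1)))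
      = 2 * (c * N / (N + 1)) * (-c / (N + 1)) + (N - 1) * (-c / (N + 1)) ^ 2 := by
    intro i i' hii
    have h : ∀ j : Fin (n + 1),
        (if j = i then c * N / (N + 1) else -c / (N + 1)) *
          (if j = i' then c * N / (N + 1) else -c / (N + 1))
        = (-c / (N + 1)) ^ 2
          + (if j = i then (c * N / (N + 1)) * (-c / (N + 1)) - (-c / (N + 1)) ^ 2 else 0)
          + (if j = i' then (c * N / (N + 1)) * (-c / (N + 1)) - (-c / (N + 1)) ^ 2 else 0) := by
      intro j
      rcases eq_or_ne j i with rfl | hji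
      · rw [if_pos rfl, if_pos rfl, if_neg (by simpa using hii), if_neg]
        · ring
        · exact fun h => hii (h ▸ rfl)
      · rw [if_neg hji, if_neg hji]
        rcases eq_or_ne j i' with rfl | hji'
        · rw [if_pos rfl, if_pos rfl]; ring
        · rw [if_neg hji', if_neg hji']; ring
    simp_rw [h, Finset.sum_add_distrib, Finset.sum_const, Finset.sum_ite_eq',
      Finset.mem_univ, if_pos, Finset.card_univ, Fintype.card_fin, nsmul_eq_mul]
    push_cast [hN']
    ring
  have hinner_self : ∀ i, (inner ℝ (w i) (w i) : ℝ) = 1 := by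
    intro i
    simp only [PiLp.inner_apply, RCLike.inner_apply, conj_trivial, hw, PiLp.toLp_apply]
    have h : ∀ j : Fin (n + 1),
        (if j = i then c * N / (N + 1) else -c / (N + 1)) *
          (if j = i then c * N / (N + 1) else -c / (N + 1))
        = if j = i then (c * N / (N + 1)) ^ 2 else (-c / (N + 1)) ^ 2 := by
      intro j; split <;> ring
    simp_rw [h, key]
    have hc3 : c ^ 2 * N = N + 1 := by rw [hc2]; field_simp
    field_simp
    linear_combination hc3
  have hinner_ne : ∀ i i', i ≠ i' → (inner ℝ (w i) (w i') : ℝ) = -(1 / N) := by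
    intro i i' hii
    simp only [PiLp.inner_apply, RCLike.inner_apply, conj_trivial, hw, PiLp.toLp_apply]
    rw [key2 i' i hii.symm]
    have h2 : 2 * (c * N / (N + 1)) * (-c / (N + 1)) + (N - 1) * (-c / (N + 1)) ^ 2
        = -(c ^ 2) / (N + 1) := by field_simp; ring
    rw [h2, hc2]
    field_simp
  -- the embedding
  let ι : V → Fin (n + 1) := fun v => Fin.castSucc ((Fintype.equivFin V) v)
  have hι : Function.Injective ι :=
    (Fin.castSucc_injective n).comp (Fintype.equivFin V).injective
  refine ⟨N + 1, ⟨by linarith, n + 1, fun v => w (ι v), ?_, ?_⟩⟩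
  · intro v
    have h1 : ‖w (ι v)‖ ^ 2 = 1 := by rw [← real_inner_self_eq_norm_sq]; exact hinner_self _
    nlinarith [norm_nonneg (w (ι v))]
  · intro u v huv
    have : (inner ℝ (w (ι u)) (w (ι v)) : ℝ) = -(1 / N) :=
      hinner_ne _ _ (fun h => huv.ne (hι h))
    rw [this]
    simp

lemma vcSet_boxProd_left {U W : Type*} [Nonempty W] (G : SimpleGraph U) (H : SimpleGraph W) :
    vcSet (G.boxProd H) ⊆ vcSet G := by
  rintro k ⟨h1, d, Φ, hn, he⟩
  obtain ⟨w₀⟩ := ‹Nonempty W›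
  exact ⟨h1, d, fun u => Φ (u, w₀), fun u => hn _, fun u v huv =>
    he (u, w₀) (v, w₀) (Or.inl ⟨huv, rfl⟩)⟩

lemma vcSet_boxProd_right {U W : Type*} [Nonempty U] (G : SimpleGraph U) (H : SimpleGraph W) :
    vcSet (G.boxProd H) ⊆ vcSet H := by
  rintro k ⟨h1, d, Φ, hn, he⟩
  obtain ⟨u₀⟩ := ‹Nonempty U›
  exact ⟨h1, d, fun w => Φ (u₀, w), fun w => hn _, fun u v huv =>
    he (u₀, u) (u₀, v) (Or.inr ⟨huv, rfl⟩)⟩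

lemma inner_tensor {d1 d2 : ℕ} (x x' : EuclideanSpace ℝ (Fin d1))
    (y y' : EuclideanSpace ℝ (Fin d2)) :
    (inner ℝ (show EuclideanSpace ℝ (Fin (d1*d2)) from WithLp.toLp 2 <|
        fun j => x (finProdFinEquiv.symm j).1 * y (finProdFinEquiv.symm j).2)
      (show EuclideanSpace ℝ (Fin (d1*d2)) from WithLp.toLp 2 <|
        fun j => x' (finProdFinEquiv.symm j).1 * y' (finProdFinEquiv.symm j).2) : ℝ)
    = (inner ℝ x x' : ℝ) * (inner ℝ y y' : ℝ) := by
  simp only [PiLp.inner_apply, RCLike.inner_apply, conj_trivial, PiLp.toLp_apply]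
  rw [← Equiv.sum_comp (finProdFinEquiv : Fin d1 × Fin d2 ≃ Fin (d1*d2))]
  rw [Finset.sum_mul_sum]
  rw [Fintype.sum_prod_type]
  refine Finset.sum_congr rfl fun a _ => Finset.sum_congr rfl fun b _ => ?_
  rw [Equiv.symm_apply_apply]
  ring

lemma vcSet_inter_subset_boxProd {U W : Type*} (G : SimpleGraph U) (H : SimpleGraph W) :
    vcSet G ∩ vcSet H ⊆ vcSet (G.boxProd H) := by
  rintro k ⟨⟨h1, d1, φ, hφn, hφe⟩, ⟨-, d2, ψ, hψn, hψe⟩⟩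
  have hφ1 : ∀ u, (inner ℝ (φ u) (φ u) : ℝ) = 1 := by
    intro u; rw [real_inner_self_eq_norm_sq, hφn]; norm_num
  have hψ1 : ∀ w, (inner ℝ (ψ w) (ψ w) : ℝ) = 1 := by
    intro w; rw [real_inner_self_eq_norm_sq, hψn]; norm_num
  refine ⟨h1, d1 * d2, fun p => (show EuclideanSpace ℝ (Fin (d1*d2)) from WithLp.toLp 2 <|
    fun j => φ p.1 (finProdFinEquiv.symm j).1 * ψ p.2 (finProdFinEquiv.symm j).2), ?_, ?_⟩
  · intro p
    have hsq : ‖(show EuclideanSpace ℝ (Fin (d1*d2)) from WithLp.toLp 2 <|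
        fun j => φ p.1 (finProdFinEquiv.symm j).1 * ψ p.2 (finProdFinEquiv.symm j).2)‖ ^ 2
        = 1 := by
      rw [← real_inner_self_eq_norm_sq, inner_tensor, hφ1, hψ1]; norm_num
    nlinarith [norm_nonneg (show EuclideanSpace ℝ (Fin (d1*d2)) from WithLp.toLp 2 <|
      fun j => φ p.1 (finProdFinEquiv.symm j).1 * ψ p.2 (finProdFinEquiv.symm j).2)]
  · intro p q hpq
    rw [SimpleGraph.boxProd_adj] at hpq
    rcases hpq with ⟨ha, he⟩ | ⟨ha, he⟩
    · rw [inner_tensor, he, hψ1, mul_one]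
      exact hφe _ _ ha
    · rw [inner_tensor, he, hφ1, one_mul]
      exact hψe _ _ ha

lemma sInf_inter_upward {A B : Set ℝ} (hA : ∀ ⦃x y⦄, x ∈ A → x ≤ y → y ∈ A)
    (hB : ∀ ⦃x y⦄, x ∈ B → x ≤ y → y ∈ B) (hAne : A.Nonempty) (hBne : B.Nonempty)
    (hAb : BddBelow A) (hBb : BddBelow B) :
    sInf (A ∩ B) = max (sInf A) (sInf B) := by
  obtain ⟨x, hx⟩ := id hAne
  obtain ⟨y, hy⟩ := id hBne
  have hABne : (A ∩ B).Nonempty :=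
    ⟨max x y, hA hx (le_max_left _ _), hB hy (le_max_right _ _)⟩
  have hABb : BddBelow (A ∩ B) := hAb.mono Set.inter_subset_left
  apply le_antisymm
  · apply le_of_forall_pos_le_add
    intro ε hε
    set M := max (sInf A) (sInf B)
    have hMA : M + ε ∈ A := by
      obtain ⟨z, hz, hzlt⟩ := exists_lt_of_csInf_lt hAne
        (show sInf A < M + ε by have := le_max_left (sInf A) (sInf B); linarith)
      exact hA hz (le_of_lt hzlt)
    have hMB : M + ε ∈ B := by
      obtain ⟨z, hz, hzlt⟩ := exists_lt_of_csInf_lt hBne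
        (show sInf B < M + ε by have := le_max_right (sInf A) (sInf B); linarith)
      exact hB hz (le_of_lt hzlt)
    exact csInf_le hABb ⟨hMA, hMB⟩
  · exact max_le (le_csInf hABne fun z hz => csInf_le hAb hz.1)
      (le_csInf hABne fun z hz => csInf_le hBb hz.2)

/-- Sabidussi's theorem for the vector chromatic number. -/
theorem stmt10 {U W : Type*} [Fintype U] [Fintype W] [Nonempty U] [Nonempty W]
    (G : SimpleGraph U) (H : SimpleGraph W) :
    vecChrom (G.boxProd H) = max (vecChrom G) (vecChrom H) := by
  have hset : vcSet (G.boxProd H) = vcSet G ∩ vcSet H :=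
    le_antisymm (Set.subset_inter (vcSet_boxProd_left G H) (vcSet_boxProd_right G H))
      (vcSet_inter_subset_boxProd G H)
  show sInf (vcSet (G.boxProd H)) = max (sInf (vcSet G)) (sInf (vcSet H))
  rw [hset]
  exact sInf_inter_upward (fun _ _ => vcSet_upward G) (fun _ _ => vcSet_upward H)
    (vcSet_nonempty G) (vcSet_nonempty H) (vcSet_bddBelow G) (vcSet_bddBelow H)
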